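/- Let F be the free group on two generators a, b, and let H = ⟨a⟩ be the cyclic subgroup generated by a. Then H is malnormal in F: for every g ∈ F \ H, H ∩ gHg⁻¹ = {1}. -/

import Mathlib

open FreeGroup

/-- Non-cancelling adjacent letters. -/
abbrev NC (x y : α × Bool) : Prop := ¬ (x.1 = y.1 ∧ x.2 = !y.2)

variable {α : Type*} [DecidableEq α]

lemma chain'_reduce (L : List (α × Bool)) : List.IsChain NC (FreeGroup.reduce L) := by
  induction L with
  | nil => simp
  | cons x L ih =>
    rw [FreeGroup.reduce.cons]
    rcases h : FreeGroup.reduce L with _ | ⟨hd, tl⟩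
    · simp
    · rw [h] at ih
      by_cases hc : x.1 = hd.1 ∧ x.2 = !hd.2
      · simpa [hc] using ih.tail
      · simp only [hc, if_false]
        exact List.isChain_cons_cons.2 ⟨hc, ih⟩

lemma reduce_eq_self_of_chain' {L : List (α × Bool)} (h : List.IsChain NC L) :
    FreeGroup.reduce L = L := by
  induction L with
  | nil => rfl
  | cons x L ih =>
    rw [FreeGroup.reduce.cons, ih h.tail]
    cases L with
    | nil => rfl
    | cons hd tl =>
      have : NC x hd := (List.isChain_cons_cons.1 h).1
      simp [this]

lemma of_pow_eq_mk (a : α) (k : ℕ) :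
    (FreeGroup.of a) ^ k = FreeGroup.mk (List.replicate k (a, true)) := by
  rw [← FreeGroup.toWord_of_pow a k, FreeGroup.mk_toWord]

lemma of_zpow_eq_mk (a : α) (m : ℤ) :
    ∃ (s : Bool), (FreeGroup.of a) ^ m = FreeGroup.mk (List.replicate m.natAbs (a, s)) := by
  rcases le_or_gt 0 m with hm | hm
  · refine ⟨true, ?_⟩
    rw [show m.natAbs = m.toNat by omega, ← of_pow_eq_mk, ← zpow_natCast, Int.toNat_of_nonneg hm]
  · refine ⟨false, ?_⟩
    have h1 : (FreeGroup.of a) ^ m = ((FreeGroup.of a) ^ (m.natAbs : ℤ))⁻¹ := by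
      rw [← zpow_neg]
      congr 1
      omega
    rw [h1, zpow_natCast, of_pow_eq_mk, FreeGroup.inv_mk]
    congr 1
    simp [FreeGroup.invRev]

lemma key : ∀ (k : ℕ) (L : List (Bool × Bool)), L.length = k → List.IsChain NC L →
    ∀ n : ℤ, n ≠ 0 →
    FreeGroup.mk L * (FreeGroup.of true) ^ n * (FreeGroup.mk L)⁻¹ ∈
      Subgroup.zpowers (FreeGroup.of true) →
    FreeGroup.mk L ∈ Subgroup.zpowers (FreeGroup.of true) := by
  intro k
  induction k using Nat.strong_induction_on with
  | _ k ih =>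
  intro L hlen hL n hn h
  rcases List.eq_nil_or_concat L with rfl | ⟨w, ⟨c, s⟩, rfl⟩
  · exact Subgroup.one_mem _
  simp only [List.concat_eq_append] at hlen hL h ⊢
  cases c with
  | true =>
    have hw : List.IsChain NC w := hL.prefix ⟨[(true, s)], rfl⟩
    set t : FreeGroup Bool := FreeGroup.mk [(true, s)] with ht
    have htz : t ∈ Subgroup.zpowers (FreeGroup.of true) := by
      cases s
      · refine Subgroup.mem_zpowers_iff.2 ⟨-1, ?_⟩
        rw [zpow_neg_one]
        show (FreeGroup.mk [(true, true)])⁻¹ = t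
        rw [FreeGroup.inv_mk, ht]
        congr 1
      · exact Subgroup.mem_zpowers_iff.2 ⟨1, by rw [zpow_one]; rfl⟩
    obtain ⟨e, hte⟩ := Subgroup.mem_zpowers_iff.1 htz
    have hmul : FreeGroup.mk (w ++ [(true, s)]) = FreeGroup.mk w * t := FreeGroup.mul_mk.symm
    have hre : FreeGroup.mk (w ++ [(true, s)]) * (FreeGroup.of true) ^ n *
        (FreeGroup.mk (w ++ [(true, s)]))⁻¹ =
        FreeGroup.mk w * (FreeGroup.of true) ^ n * (FreeGroup.mk w)⁻¹ := by
      rw [hmul, ← hte]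
      group
    have hlen' : w.length + 1 = k := by simpa using hlen
    have hmem := ih w.length (by omega) w rfl hw n hn (hre ▸ h)
    rw [hmul]
    exact Subgroup.mul_mem _ hmem htz
  | false =>
    exfalso
    obtain ⟨m, hm⟩ := Subgroup.mem_zpowers_iff.1 h
    obtain ⟨sn, hkn⟩ := of_zpow_eq_mk true n
    obtain ⟨sm, hkm⟩ := of_zpow_eq_mk true m
    set L : List (Bool × Bool) := w ++ [(false, s)] with hLdef
    set A : List (Bool × Bool) := List.replicate n.natAbs (true, sn) with hA
    set I : List (Bool × Bool) := FreeGroup.invRev L with hI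
    have hnn : n.natAbs ≠ 0 := by omega
    have hcL : List.IsChain NC L := hL
    have hcA : List.IsChain NC A := by
      rw [hA, ← FreeGroup.reduce_replicate]; exact chain'_reduce _
    have hcI : List.IsChain NC I := by
      have h2 : FreeGroup.reduce I = I := by
        rw [hI, FreeGroup.reduce_invRev, reduce_eq_self_of_chain' hcL]
      rw [← h2]; exact chain'_reduce _
    have hheadI : I.head? = some (false, !s) := by
      simp [hI, FreeGroup.invRev, hLdef]
    have hcJ : List.IsChain NC (L ++ (A ++ I)) := by
      refine List.isChain_append.2 ⟨hcL, List.isChain_append.2 ⟨hcA, hcI, ?_⟩, ?_⟩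
      · intro x hx y hy
        rw [hA, List.getLast?_replicate, if_neg hnn] at hx
        rw [hheadI] at hy
        simp only [Option.mem_def, Option.some.injEq] at hx hy
        subst hx; subst hy
        simp [NC]
      · intro x hx y hy
        rw [hLdef, List.getLast?_concat] at hx
        rw [List.head?_append_of_ne_nil _ (by simp [hA, hnn]), hA,
          List.head?_replicate, if_neg hnn] at hy
        simp only [Option.mem_def, Option.some.injEq] at hx hy
        subst hx; subst hy
        simp [NC]
    have hm2 : FreeGroup.mk (List.replicate m.natAbs (true, sm)) =
        FreeGroup.mk (L ++ (A ++ I)) := by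
      rw [← hkm, hm, hkn, FreeGroup.inv_mk, ← hI, FreeGroup.mul_mk, FreeGroup.mul_mk,
        List.append_assoc]
    have hJ := congrArg FreeGroup.toWord hm2
    rw [FreeGroup.toWord_mk, FreeGroup.toWord_mk, FreeGroup.reduce_replicate,
      reduce_eq_self_of_chain' hcJ] at hJ
    have hmem : ((false, s) : Bool × Bool) ∈ List.replicate m.natAbs (true, sm) := by
      rw [hJ, hLdef]
      simp
    simp [List.mem_replicate] at hmem


/-- The cyclic subgroup generated by a generator `a` of the free group on two
generators is malnormal: if `g ∉ ⟨a⟩` then `g aⁿ g⁻¹ ∈ ⟨a⟩` forces `n = 0`. -/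
theorem stmt_4 (g : FreeGroup Bool) (hg : g ∉ Subgroup.zpowers (FreeGroup.of true)) :
    ∀ n : ℤ, g * (FreeGroup.of true) ^ n * g⁻¹ ∈ Subgroup.zpowers (FreeGroup.of true) →
      n = 0 := by
  intro n hmem
  by_contra hn
  have hchain : List.IsChain NC g.toWord := by
    have := chain'_reduce g.toWord
    rwa [FreeGroup.reduce_toWord] at this
  have := key g.toWord.length g.toWord rfl hchain n hn (by rwa [FreeGroup.mk_toWord])
  rw [FreeGroup.mk_toWord] at this
  exact hg this
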